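/- Let R be a real (N+1)×(N+1) tridiagonal matrix with subdiagonal entries A_1,...,A_N and superdiagonal entries C_0,...,C_{N−1} such that A_n·C_{n−1} > 0 for all 1 ≤ n ≤ N. Then R has N+1 distinct real eigenvalues. -/

import Mathlib

open Matrix

/-- Kernel lemma: for a matrix vanishing above the superdiagonal with nonzero
superdiagonal, an eigenvector with first coordinate zero is zero. -/
lemma tridiag_eigvec_zero (N : ℕ) (S : Matrix (Fin (N+1)) (Fin (N+1)) ℝ)
    (hzero : ∀ i j : Fin (N+1), (i : ℕ) + 2 ≤ (j : ℕ) → S i j = 0)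
    (hsup : ∀ i j : Fin (N+1), (j : ℕ) = (i : ℕ) + 1 → S i j ≠ 0)
    (μ : ℝ) (v : Fin (N+1) → ℝ) (hv : S *ᵥ v = μ • v) (h0 : v 0 = 0) : v = 0 := by
  have key : ∀ k : ℕ, ∀ hk : k < N + 1, v ⟨k, hk⟩ = 0 := by
    intro k
    induction k using Nat.strong_induction_on with
    | _ k IH =>
      intro hk
      match k, hk with
      | 0, hk => exact h0
      | (m+1), hk =>
        have hm : m < N + 1 := Nat.lt_of_succ_lt hk
        have hrow : (S *ᵥ v) ⟨m, hm⟩ = μ * v ⟨m, hm⟩ := congrFun hv _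
        have hvm : v ⟨m, hm⟩ = 0 := IH m (Nat.lt_succ_self m) hm
        rw [hvm, mul_zero] at hrow
        have hsum : (S *ᵥ v) ⟨m, hm⟩ = ∑ j, S ⟨m, hm⟩ j * v j := rfl
        rw [hsum] at hrow
        have hone : ∑ j, S ⟨m, hm⟩ j * v j
            = S ⟨m, hm⟩ ⟨m+1, hk⟩ * v ⟨m+1, hk⟩ := by
          apply Finset.sum_eq_single
          · intro j _ hj
            have hjne : (j : ℕ) ≠ m + 1 := by
              intro h
              exact hj (Fin.ext h)
            rcases lt_or_ge (j : ℕ) (m+1) with h | h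
            · have hvj : v j = 0 := by
                have := IH (j : ℕ) (by omega) j.isLt
                simpa using this
              rw [hvj, mul_zero]
            · have h2 : ((⟨m, hm⟩ : Fin (N+1)) : ℕ) + 2 ≤ (j : ℕ) := by
                simp only []
                omega
              rw [hzero _ _ h2, zero_mul]
          · intro h
            exact absurd (Finset.mem_univ _) h
        rw [hone] at hrow
        have hS := hsup ⟨m, hm⟩ ⟨m+1, hk⟩ rfl
        exact (mul_eq_zero.mp hrow).resolve_left hS
  funext j
  have := key (j : ℕ) j.isLt
  simpa using this

/-- The scaling sequence used to symmetrize a tridiagonal matrix. -/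
noncomputable def tridiagScale (N : ℕ) (R : Matrix (Fin (N+1)) (Fin (N+1)) ℝ) : ℕ → ℝ
  | 0 => 1
  | (n+1) =>
    if h : n + 1 < N + 1 then
      tridiagScale N R n *
        Real.sqrt (R ⟨n, Nat.lt_of_succ_lt h⟩ ⟨n+1, h⟩ / R ⟨n+1, h⟩ ⟨n, Nat.lt_of_succ_lt h⟩)
    else 1

theorem tridiagonal_distinct_real_eigenvalues (N : ℕ)
    (R : Matrix (Fin (N + 1)) (Fin (N + 1)) ℝ)
    (htri : ∀ i j : Fin (N + 1), (i : ℕ) ≠ (j : ℕ) → (i : ℕ) ≠ (j : ℕ) + 1 →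
      (j : ℕ) ≠ (i : ℕ) + 1 → R i j = 0)
    (hpos : ∀ i j : Fin (N + 1), (i : ℕ) = (j : ℕ) + 1 → 0 < R i j * R j i) :
    ∃ μ : Fin (N + 1) → ℝ, Function.Injective μ ∧
      ∀ k, Module.End.HasEigenvalue (Matrix.toLin' R) (μ k) := by
  classical
  set f : ℕ → ℝ := tridiagScale N R with hf
  -- positivity of the scaling
  have hratio : ∀ (n : ℕ) (h : n + 1 < N + 1),
      0 < R ⟨n, Nat.lt_of_succ_lt h⟩ ⟨n+1, h⟩ / R ⟨n+1, h⟩ ⟨n, Nat.lt_of_succ_lt h⟩ := by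
    intro n h
    have hp := hpos ⟨n+1, h⟩ ⟨n, Nat.lt_of_succ_lt h⟩ rfl
    rw [mul_comm] at hp
    exact div_pos_iff.mpr (mul_pos_iff.mp hp)
  have hfpos : ∀ n : ℕ, 0 < f n := by
    intro n
    induction n with
    | zero => simp [hf, tridiagScale]
    | succ n ih =>
      by_cases h : n + 1 < N + 1
      · have : f (n+1) = f n * Real.sqrt (R ⟨n, Nat.lt_of_succ_lt h⟩ ⟨n+1, h⟩ /
            R ⟨n+1, h⟩ ⟨n, Nat.lt_of_succ_lt h⟩) := by
          simp [hf, tridiagScale, h]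
        rw [this]
        exact mul_pos ih (Real.sqrt_pos.mpr (hratio n h))
      · simp [hf, tridiagScale, h]
  set d : Fin (N+1) → ℝ := fun i => f (i : ℕ) with hd
  have hdpos : ∀ i, 0 < d i := fun i => hfpos _
  have hdne : ∀ i, d i ≠ 0 := fun i => (hdpos i).ne'
  -- the symmetrized matrix
  set S : Matrix (Fin (N+1)) (Fin (N+1)) ℝ :=
    Matrix.of (fun i j => d i * R i j / d j) with hSdef
  have hSapp : ∀ i j, S i j = d i * R i j / d j := fun i j => rfl
  -- nonvanishing of off-diagonal entries of R
  have hRsub : ∀ i j : Fin (N+1), (i : ℕ) = (j : ℕ) + 1 → R i j ≠ 0 := by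
    intro i j h hR
    have := hpos i j h
    rw [hR, zero_mul] at this
    exact lt_irrefl _ this
  have hRsup : ∀ i j : Fin (N+1), (j : ℕ) = (i : ℕ) + 1 → R i j ≠ 0 := by
    intro i j h hR
    have := hpos j i h
    rw [hR, mul_zero] at this
    exact lt_irrefl _ this
  -- the key square identity for d
  have hdsq : ∀ i j : Fin (N+1), (j : ℕ) = (i : ℕ) + 1 →
      d j ^ 2 = d i ^ 2 * (R i j / R j i) := by
    intro i j hji
    have hj : (i : ℕ) + 1 < N + 1 := hji ▸ j.isLt
    have hi' : (⟨(i : ℕ), Nat.lt_of_succ_lt hj⟩ : Fin (N+1)) = i := Fin.ext rfl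
    have hj' : (⟨(i : ℕ) + 1, hj⟩ : Fin (N+1)) = j := Fin.ext hji.symm
    have hfj : f ((i : ℕ) + 1) = f (i : ℕ) * Real.sqrt (R i j / R j i) := by
      rw [hf]
      show tridiagScale N R ((i : ℕ) + 1) = _
      rw [tridiagScale]
      rw [dif_pos hj, hi', hj']
    have hdj : d j = d i * Real.sqrt (R i j / R j i) := by
      rw [hd]
      simp only [hji]
      exact hfj
    rw [hdj]
    have hrpos : 0 < R i j / R j i := by
      have := hratio (i : ℕ) hj
      rwa [hi', hj'] at this
    rw [mul_pow, Real.sq_sqrt hrpos.le]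
  -- S is symmetric (hence Hermitian over ℝ)
  have hsymm : ∀ i j, S j i = S i j := by
    intro i j
    rcases Nat.lt_trichotomy (i : ℕ) (j : ℕ) with h | h | h
    · rcases eq_or_ne ((j : ℕ)) ((i : ℕ) + 1) with hji | hji
      · -- superdiagonal case
        have hsq := hdsq i j hji
        have hRne : R j i ≠ 0 := hRsub j i hji
        rw [hSapp, hSapp, div_eq_div_iff (hdne i) (hdne j)]
        have hkey : d j ^ 2 * R j i = d i ^ 2 * R i j := by
          rw [hsq, mul_assoc, div_mul_cancel₀ _ hRne]
        linear_combination hkey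
      · have h1 : R i j = 0 := htri i j (by omega) (by omega) hji
        have h2 : R j i = 0 := htri j i (by omega) hji (by omega)
        rw [hSapp, hSapp, h1, h2, mul_zero, mul_zero, zero_div, zero_div]
    · have : i = j := Fin.ext h
      rw [this]
    · rcases eq_or_ne ((i : ℕ)) ((j : ℕ) + 1) with hij | hij
      · have hsq := hdsq j i hij
        have hRne : R i j ≠ 0 := hRsub i j hij
        rw [hSapp, hSapp, div_eq_div_iff (hdne i) (hdne j)]
        have hkey : d i ^ 2 * R i j = d j ^ 2 * R j i := by
          rw [hsq, mul_assoc, div_mul_cancel₀ _ hRne]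
        linear_combination -hkey
      · have h1 : R i j = 0 := htri i j (by omega) hij (by omega)
        have h2 : R j i = 0 := htri j i (by omega) (by omega) hij
        rw [hSapp, hSapp, h1, h2, mul_zero, mul_zero, zero_div, zero_div]
  have hS : S.IsHermitian := by
    ext i j
    simp only [conjTranspose_apply, RCLike.star_def, starRingEnd_apply, star_trivial]
    exact hsymm i j
  -- S satisfies the hypotheses of the kernel lemma
  have hSzero : ∀ i j : Fin (N+1), (i : ℕ) + 2 ≤ (j : ℕ) → S i j = 0 := by
    intro i j h
    have : R i j = 0 := htri i j (by omega) (by omega) (by omega)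
    rw [hSapp, this, mul_zero, zero_div]
  have hSsup : ∀ i j : Fin (N+1), (j : ℕ) = (i : ℕ) + 1 → S i j ≠ 0 := by
    intro i j h
    rw [hSapp]
    exact div_ne_zero (mul_ne_zero (hdne i) (hRsup i j h)) (hdne j)
  -- eigenvectors of S
  set b := hS.eigenvectorBasis with hb
  have hmul : ∀ k, S *ᵥ ⇑(b k) = hS.eigenvalues k • ⇑(b k) :=
    fun k => hS.mulVec_eigenvectorBasis k
  have hbne : ∀ k, ⇑(b k) ≠ 0 := by
    intro k hzero
    have hne := hS.eigenvectorBasis.toBasis.ne_zero k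
    apply hne
    rw [OrthonormalBasis.coe_toBasis]
    apply PiLp.ext
    intro x
    exact congrFun hzero x
  have hb0 : ∀ k, b k 0 ≠ 0 := by
    intro k h0
    exact hbne k (tridiag_eigvec_zero N S hSzero hSsup (hS.eigenvalues k) _ (hmul k) h0)
  -- injectivity of eigenvalues
  have hinj : Function.Injective hS.eigenvalues := by
    intro i j hij
    by_contra hne
    set c : ℝ := b i 0 / b j 0 with hc
    set u : Fin (N+1) → ℝ := ⇑(b i) - c • ⇑(b j) with hu
    have hu0 : u 0 = 0 := by
      simp only [hu, hc, Pi.sub_apply, Pi.smul_apply, smul_eq_mul]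
      show b i 0 - b i 0 / b j 0 * b j 0 = 0
      rw [div_mul_cancel₀ _ (hb0 j), sub_self]
    have humul : S *ᵥ u = hS.eigenvalues i • u := by
      rw [hu, mulVec_sub, mulVec_smul, hmul i, hmul j, hij]
      ext x
      simp [smul_sub]
      ring
    have huz : u = 0 := tridiag_eigvec_zero N S hSzero hSsup _ u humul hu0
    have heq : ⇑(b i) = c • ⇑(b j) := by
      have := sub_eq_zero.mp huz
      exact this
    have h2 : b i = c • b j := by
      apply PiLp.ext
      intro x
      exact congrFun heq x
    have := congrArg (fun v => (hS.eigenvectorBasis.repr v) i) h2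
    simp [hb, OrthonormalBasis.repr_self, EuclideanSpace.single_apply, hne] at this
  refine ⟨hS.eigenvalues, hinj, ?_⟩
  intro k
  -- transfer eigenvector back to R
  set w : Fin (N+1) → ℝ := ⇑(b k) with hw
  set v : Fin (N+1) → ℝ := fun i => w i / d i with hv
  have hvne : v ≠ 0 := by
    intro h
    apply hbne k
    funext x
    have := congrFun h x
    simp only [hv] at this
    have := (div_eq_zero_iff.mp this).resolve_right (hdne x)
    exact this
  have hRv : R *ᵥ v = hS.eigenvalues k • v := by
    funext i
    have hSw : (S *ᵥ w) i = hS.eigenvalues k * w i := congrFun (hmul k) i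
    have hstep : (R *ᵥ v) i = (S *ᵥ w) i / d i := by
      simp only [mulVec, dotProduct]
      rw [Finset.sum_div]
      apply Finset.sum_congr rfl
      intro j _
      rw [hSapp]
      simp only [hv]
      field_simp
      exact (mul_div_mul_right _ _ (hdne i)).symm
    rw [hstep, hSw]
    simp only [Pi.smul_apply, smul_eq_mul, hv]
    ring
  apply Module.End.hasEigenvalue_of_hasEigenvector (x := v)
  constructor
  · rw [Module.End.mem_eigenspace_iff, Matrix.toLin'_apply]
    exact hRv
  · exact hvne
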